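/- arXiv:2107.04828 — 2 statements merged into one kernel-verified Lean document; each statement's English description precedes it below -/
import Mathlib

section
/- Let (K,ν) be a valued field and ω a value transcendental extension of ν to K(x) with minimal pair of definition (a,γ); let Q ∈ K[x] be the minimal polynomial of a over K and ω̄ = ν̄_{a,γ} the corresponding common extension of ω and ν̄ to K̄(x). Then: (1) ωQ ∉ ν̄K̄; (2) for every g ∈ K[x] with deg g < deg Q, ωg = ν̄g(a); (3) for every f ∈ K[x] with Q-expansion f = f₀ + f₁Q + ⋯ + f_rQ^r (deg fᵢ < deg Q), ωf = minᵢ(ν̄fᵢ(a) + i ωQ). -/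
/- ---------------------------------------------------------------------------
Common definitions for formalizing "Minimal pairs, minimal fields and
implicit constant fields" (Dutta).

Valuations are formalized additively, as `AddValuation F (WithTop Γ)` where
`Γ` is a linearly ordered abelian group; the value `⊤` plays the role of the
value `∞` of `0`.  The algebraic closure `K̄` of `K` is `AlgebraicClosure K`,
the rational function field `K(x)` is `RatFunc K`, and a fixed algebraic
closure of `K̄(x)` (equivalently, of `K(x)`) is
`Lhat K := AlgebraicClosure (RatFunc (AlgebraicClosure K))`.
--------------------------------------------------------------------------- -/

noncomputable section

open Polynomial

namespace VT

/-- The canonical embedding of the rational function field `K(x)` into `K̄(x)`. -/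
def liftRF (K : Type) [Field K] : RatFunc K →+* RatFunc (AlgebraicClosure K) :=
  RatFunc.mapRingHom (Polynomial.mapRingHom (algebraMap K (AlgebraicClosure K)))
    (by
      intro p hp
      simp only [Submonoid.mem_comap, Polynomial.coe_mapRingHom]
      rw [mem_nonZeroDivisors_iff_ne_zero] at hp ⊢
      rw [Ne, Polynomial.map_eq_zero_iff (algebraMap K (AlgebraicClosure K)).injective]
      exact hp)

variable {K : Type} [Field K] {Γ : Type} [AddCommGroup Γ] [LinearOrder Γ] [IsOrderedAddMonoid Γ]

/-- `w` extends the valuation `v` along the field embedding `g`. -/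
def Extends {A B : Type} [Field A] [Field B] (g : A →+* B)
    (v : AddValuation A (WithTop Γ)) (w : AddValuation B (WithTop Γ)) : Prop :=
  ∀ x, w (g x) = v x

/-- `W` is the monomial valuation `ν̄_{a,γ}` on `K̄(x)` attached to `a ∈ K̄` and `γ ∈ Γ`:
on a polynomial `p = Σᵢ cᵢ (x-a)ⁱ` its value is `minᵢ (ν̄ cᵢ + iγ)`.  (A valuation on
`K̄(x)` is determined by its restriction to polynomials.)  In particular `W` extends
the valuation `ν̄ = vbar` of `K̄`. -/
def IsMonomialVal (vbar : AddValuation (AlgebraicClosure K) (WithTop Γ))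
    (W : AddValuation (RatFunc (AlgebraicClosure K)) (WithTop Γ))
    (a : AlgebraicClosure K) (γ : Γ) : Prop :=
  ∀ p : Polynomial (AlgebraicClosure K),
    W (algebraMap (Polynomial (AlgebraicClosure K)) (RatFunc (AlgebraicClosure K)) p) =
      (Finset.range (p.natDegree + 1)).inf
        (fun i => vbar ((Polynomial.taylor a p).coeff i) + i • (γ : WithTop Γ))

/-- The degree `[K(a):K]` of an element `a` of the algebraic closure of `K`. -/
def degOver (K : Type) [Field K] (a : AlgebraicClosure K) : ℕ := (minpoly K a).natDegree

/-- `(a,γ)` is a pair of definition for the valuation `ω` on `K(x)`:  some common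
extension of `ω` and `ν̄ = vbar` to `K̄(x)` is the monomial valuation `ν̄_{a,γ}`. -/
def IsPairOfDef (vbar : AddValuation (AlgebraicClosure K) (WithTop Γ))
    (ω : AddValuation (RatFunc K) (WithTop Γ)) (a : AlgebraicClosure K) (γ : Γ) : Prop :=
  ∃ W : AddValuation (RatFunc (AlgebraicClosure K)) (WithTop Γ),
    IsMonomialVal vbar W a γ ∧ Extends (liftRF K) ω W

/-- `(a,γ)` is a minimal pair of definition for `ω`. -/
def IsMinimalPairOfDef (vbar : AddValuation (AlgebraicClosure K) (WithTop Γ))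
    (ω : AddValuation (RatFunc K) (WithTop Γ)) (a : AlgebraicClosure K) (γ : Γ) : Prop :=
  IsPairOfDef vbar ω a γ ∧
    ∀ b : AlgebraicClosure K, (γ : WithTop Γ) ≤ vbar (a - b) → degOver K a ≤ degOver K b

/-- `(a,γ)` is a pair of definition for the valuation `W` on `K̄(x)`, i.e. `W = ν̄_{a,γ}`,
and it is minimal: `a` has least degree over `K` among all `b` with `ν̄(a-b) ≥ γ`. -/
def IsMinimalPairFor (vbar : AddValuation (AlgebraicClosure K) (WithTop Γ))
    (W : AddValuation (RatFunc (AlgebraicClosure K)) (WithTop Γ))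
    (a : AlgebraicClosure K) (γ : Γ) : Prop :=
  IsMonomialVal vbar W a γ ∧
    ∀ b : AlgebraicClosure K, (γ : WithTop Γ) ≤ vbar (a - b) → degOver K a ≤ degOver K b

/-- The valued field extension `(F|B, w)` (along `φ`) is value transcendental:
the quotient of value groups `wF / w(B)` has rational rank one, i.e. there is a value
which is not torsion modulo the value group of the base, and any two values are
`ℚ`-linearly dependent modulo the value group of the base.  (For the extensions of
valuations from `K` to `K(x)` considered in the paper, the second condition is
automatic, by the Abhyankar inequality.) -/
def IsValueTranscendental {B F : Type} [Field B] [Field F] (φ : B →+* F)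
    (w : AddValuation F (WithTop Γ)) : Prop :=
  (∃ (f : F) (γf : Γ), f ≠ 0 ∧ w f = (γf : WithTop Γ) ∧
      ∀ n : ℤ, n ≠ 0 → ∀ c : B, c ≠ 0 → ((n • γf : Γ) : WithTop Γ) ≠ w (φ c)) ∧
  (∀ (f g : F) (γf γg : Γ), f ≠ 0 → g ≠ 0 → w f = (γf : WithTop Γ) → w g = (γg : WithTop Γ) →
      ∃ m n : ℤ, ¬(m = 0 ∧ n = 0) ∧
        ∃ c : B, c ≠ 0 ∧ ((m • γf + n • γg : Γ) : WithTop Γ) = w (φ c))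

/-- The residue of `u` (an element of the valuation ring of `(F,w)`) is transcendental
over the residue field of the subset `S ⊆ F`:  whenever a polynomial expression
`Σᵢ cᵢ uⁱ` with coefficients `cᵢ ∈ S` of value `≥ 0` has value `> 0`, all the
coefficients have value `> 0` (i.e. residue `0`). -/
def ResidueTransOver {F : Type} [Field F] (w : AddValuation F (WithTop Γ))
    (S : Set F) (u : F) : Prop :=
  ∀ (n : ℕ) (c : ℕ → F), (∀ i ∈ Finset.range (n + 1), c i ∈ S ∧ 0 ≤ w (c i)) →
    0 < w (∑ i ∈ Finset.range (n + 1), c i * u ^ i) →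
    ∀ i ∈ Finset.range (n + 1), 0 < w (c i)

/-- The valued field extension `(F|B, w)` (along `φ`) is residue transcendental:
the residue field extension has transcendence degree one, i.e. some residue is
transcendental over the residue field of the base.  (For the extensions of valuations
from `K` to `K(x)` considered in the paper, transcendence degree `≤ 1` is automatic,
by the Abhyankar inequality.) -/
def IsResidueTranscendental {B F : Type} [Field B] [Field F] (φ : B →+* F)
    (w : AddValuation F (WithTop Γ)) : Prop :=
  ∃ f : F, w f = 0 ∧ ResidueTransOver w (Set.range φ) f

/-- The extension is valuation transcendental: value transcendental or residue
transcendental. -/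
def IsValuationTranscendental {B F : Type} [Field B] [Field F] (φ : B →+* F)
    (w : AddValuation F (WithTop Γ)) : Prop :=
  IsValueTranscendental φ w ∨ IsResidueTranscendental φ w

/-- The value group of the subset `S ⊆ F` under `w`, as a subgroup of `Γ`:
the subgroup { w f | f ∈ S, f ≠ 0 }.  (For `S` a subfield this set is already a
subgroup, so taking the generated subgroup is harmless.) -/
def valueSubgroup {F : Type} [Field F] (w : AddValuation F (WithTop Γ)) (S : Set F) :
    AddSubgroup Γ :=
  AddSubgroup.closure {γ : Γ | ∃ f ∈ S, f ≠ 0 ∧ w f = (γ : WithTop Γ)}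

/-- The subsets `S₁, S₂` of the valued field `(F,w)` have the same residues, i.e. they
induce the same residue field inside the residue field of `(F,w)`. -/
def SameResidues {F : Type} [Field F] (w : AddValuation F (WithTop Γ))
    (S₁ S₂ : Set F) : Prop :=
  (∀ f ∈ S₁, 0 ≤ w f → ∃ g ∈ S₂, 0 ≤ w g ∧ 0 < w (f - g)) ∧
  (∀ g ∈ S₂, 0 ≤ w g → ∃ f ∈ S₁, 0 ≤ w f ∧ 0 < w (g - f))

/-- The residue field of `S₂` has degree `j` over the residue field of `S₁` (both viewed
inside the residue field of `(F,w)`): there are `j` elements of `S₂`, integral for `w`,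
whose residues form a basis of the residue field of `S₂` over that of `S₁`. -/
def ResidueDegreeIs {F : Type} [Field F] (w : AddValuation F (WithTop Γ))
    (S₁ S₂ : Set F) (j : ℕ) : Prop :=
  ∃ g : Fin j → F,
    (∀ i, g i ∈ S₂ ∧ 0 ≤ w (g i)) ∧
    (∀ h ∈ S₂, 0 ≤ w h →
      ∃ c : Fin j → F, (∀ i, c i ∈ S₁ ∧ 0 ≤ w (c i)) ∧ 0 < w (h - ∑ i, c i * g i)) ∧
    (∀ c : Fin j → F, (∀ i, c i ∈ S₁ ∧ 0 ≤ w (c i)) →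
      0 < w (∑ i, c i * g i) → ∀ i, 0 < w (c i))

/-- `κ` is the Krasner constant `kras(a,K) = max { ν̄(σa - τa) : σ, τ ∈ Gal(K̄|K), σa ≠ τa }`. -/
def IsKrasnerConstant (vbar : AddValuation (AlgebraicClosure K) (WithTop Γ))
    (a : AlgebraicClosure K) (κ : WithTop Γ) : Prop :=
  (∃ σ τ : AlgebraicClosure K ≃ₐ[K] AlgebraicClosure K, σ a ≠ τ a ∧ vbar (σ a - τ a) = κ) ∧
  (∀ σ τ : AlgebraicClosure K ≃ₐ[K] AlgebraicClosure K, σ a ≠ τ a → vbar (σ a - τ a) ≤ κ)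

/-- `y` is separable algebraic over the subfield `E` of `F`: it is the root of a nonzero
separable polynomial with coefficients in `E`. -/
def SepAlgOver {F : Type} [Field F] (E : Subfield F) (y : F) : Prop :=
  ∃ p : Polynomial F, p ≠ 0 ∧ (∀ i, p.coeff i ∈ E) ∧ p.Separable ∧ p.eval y = 0

/-- `y` is algebraic over the subfield `E` of `F`. -/
def AlgOver {F : Type} [Field F] (E : Subfield F) (y : F) : Prop :=
  ∃ p : Polynomial F, p ≠ 0 ∧ (∀ i, p.coeff i ∈ E) ∧ p.eval y = 0

/-- The henselization `E^h` of the subfield `E` of the algebraically closed valued field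
`(F,Ω)`, realized inside `F` as the decomposition field: the set of elements of `F`
separable algebraic over `E` and fixed by every automorphism of `F` over `E` which
preserves the valuation `Ω`. -/
def henselizationSet {F : Type} [Field F] (Ω : AddValuation F (WithTop Γ))
    (E : Subfield F) : Set F :=
  {y | SepAlgOver E y ∧
    ∀ σ : F ≃+* F, (∀ e ∈ E, σ e = e) → (∀ z, Ω (σ z) = Ω z) → σ y = y}

/-- A fixed algebraic closure of `K̄(x)`; it is also an algebraic closure of `K(x)`. -/
abbrev Lhat (K : Type) [Field K] : Type := AlgebraicClosure (RatFunc (AlgebraicClosure K))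

/-- The canonical embedding `K̄ → Lhat K`. -/
def toL (K : Type) [Field K] : AlgebraicClosure K →+* Lhat K :=
  (algebraMap (RatFunc (AlgebraicClosure K)) (Lhat K)).comp
    (algebraMap (AlgebraicClosure K) (RatFunc (AlgebraicClosure K)))

/-- The canonical embedding `K(x) → Lhat K`. -/
def kxToL (K : Type) [Field K] : RatFunc K →+* Lhat K :=
  (algebraMap (RatFunc (AlgebraicClosure K)) (Lhat K)).comp (liftRF K)

/-- The subfield `K(x)` of `Lhat K`. -/
def KxSub (K : Type) [Field K] : Subfield (Lhat K) := (kxToL K).fieldRange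

/-- The subfield `K` of `Lhat K`. -/
def KSub (K : Type) [Field K] : Subfield (Lhat K) :=
  ((toL K).comp (algebraMap K (AlgebraicClosure K))).fieldRange

/-- The subfield `K(a)` of `Lhat K`, for `a ∈ K̄`. -/
def KadjSub (K : Type) [Field K] (a : AlgebraicClosure K) : Subfield (Lhat K) :=
  Subfield.closure ((KSub K : Set (Lhat K)) ∪ {toL K a})

/-- The subfield `K(a,x)` of `Lhat K`, for `a ∈ K̄`. -/
def KaxSub (K : Type) [Field K] (a : AlgebraicClosure K) : Subfield (Lhat K) :=
  Subfield.closure ((KxSub K : Set (Lhat K)) ∪ {toL K a})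

/-- The implicit constant field `IC(K(x)|K,ω) = K̄ ∩ K(x)^h`, computed inside the fixed
algebraic closure `Lhat K` of `K(x)` with respect to the valuation `Ω` on it. -/
def ICset (K : Type) [Field K] {Γ : Type} [AddCommGroup Γ] [LinearOrder Γ] [IsOrderedAddMonoid Γ]
    (Ω : AddValuation (Lhat K) (WithTop Γ)) : Set (Lhat K) :=
  Set.range (toL K) ∩ henselizationSet Ω (KxSub K)

/-- `σ` belongs to the absolute inertia group of `(K,ν̄)`:
`ν̄(σc - c) > 0` for every `c` in the valuation ring of `K^sep`. -/
def InInertiaGroup (vbar : AddValuation (AlgebraicClosure K) (WithTop Γ))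
    (σ : AlgebraicClosure K ≃ₐ[K] AlgebraicClosure K) : Prop :=
  ∀ c : AlgebraicClosure K, (minpoly K c).Separable → 0 ≤ vbar c → 0 < vbar (σ c - c)

/-- `σ` belongs to the absolute ramification group of `(K,ν̄)`:
`ν̄(σc - c) > ν̄ c` for every `c ∈ K^sep`, `c ≠ 0`. -/
def InRamificationGroup (vbar : AddValuation (AlgebraicClosure K) (WithTop Γ))
    (σ : AlgebraicClosure K ≃ₐ[K] AlgebraicClosure K) : Prop :=
  ∀ c : AlgebraicClosure K, c ≠ 0 → (minpoly K c).Separable → vbar c < vbar (σ c - c)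

/-- The absolute inertia field `K^i` of `(K,ν̄)`, as a subset of `K̄`: the fixed field in
`K^sep` of the absolute inertia group. -/
def inertiaFieldSet (vbar : AddValuation (AlgebraicClosure K) (WithTop Γ)) :
    Set (AlgebraicClosure K) :=
  {c | (minpoly K c).Separable ∧
    ∀ σ : AlgebraicClosure K ≃ₐ[K] AlgebraicClosure K, InInertiaGroup vbar σ → σ c = c}

/-- The absolute ramification field `K^r` of `(K,ν̄)`, as a subset of `K̄`: the fixed field
in `K^sep` of the absolute ramification group. -/
def ramificationFieldSet (vbar : AddValuation (AlgebraicClosure K) (WithTop Γ)) :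
    Set (AlgebraicClosure K) :=
  {c | (minpoly K c).Separable ∧
    ∀ σ : AlgebraicClosure K ≃ₐ[K] AlgebraicClosure K, InRamificationGroup vbar σ → σ c = c}

/-- `(K,ν)` is henselian, i.e. `ν` extends uniquely to `K̄`; equivalently (all extensions
of `ν` to `K̄` being conjugate), the fixed extension `ν̄` is invariant under `Gal(K̄|K)`. -/
def IsHenselianBase (vbar : AddValuation (AlgebraicClosure K) (WithTop Γ)) : Prop :=
  ∀ σ : AlgebraicClosure K ≃ₐ[K] AlgebraicClosure K, ∀ c, vbar (σ c) = vbar c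

/-- `ν` admits a unique extension from `K` to `K(a)`; equivalently, all the conjugate
extensions agree on `K(a)`. -/
def UniqueExtensionOn (vbar : AddValuation (AlgebraicClosure K) (WithTop Γ))
    (a : AlgebraicClosure K) : Prop :=
  ∀ σ : AlgebraicClosure K ≃ₐ[K] AlgebraicClosure K,
    ∀ b ∈ IntermediateField.adjoin K {a}, vbar (σ b) = vbar b

/-- `succ` is a successor function for the linear order `ι`. -/
def IsSuccFn {ι : Type} [LinearOrder ι] (succ : ι → ι) : Prop :=
  ∀ μ, μ < succ μ ∧ ∀ ρ, μ < ρ → succ μ ≤ ρ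

/-- `z` is a pseudo-Cauchy sequence in `(F,v)`. -/
def IsPseudoCauchy {F ι : Type} [Field F] [LinearOrder ι]
    (v : AddValuation F (WithTop Γ)) (z : ι → F) : Prop :=
  ∀ ⦃μ₁ μ₂ μ₃ : ι⦄, μ₁ < μ₂ → μ₂ < μ₃ → v (z μ₁ - z μ₂) < v (z μ₂ - z μ₃)

/-- `y` (in the valued extension `(F,w)` of `(B,v)` along `φ`) is a limit of the
pseudo-Cauchy sequence `z` in `(B,v)`:  `w(y - z_μ) = v(z_μ - z_{μ+1})` for all `μ`. -/
def IsPCLimit {B F ι : Type} [Field B] [Field F] [LinearOrder ι]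
    (succ : ι → ι) (φ : B →+* F)
    (v : AddValuation B (WithTop Γ)) (w : AddValuation F (WithTop Γ))
    (z : ι → B) (y : F) : Prop :=
  ∀ μ : ι, w (y - φ (z μ)) = v (z μ - z (succ μ))

/-- The sequence `s` is ultimately constant. -/
def UltimatelyConstant {ι α : Type} [LinearOrder ι] (s : ι → α) : Prop :=
  ∃ μ₀, ∀ μ, μ₀ ≤ μ → s μ = s μ₀

/-- The sequence `s` is ultimately (strictly) monotonically increasing. -/
def UltimatelyStrictMono {ι α : Type} [LinearOrder ι] [Preorder α] (s : ι → α) : Prop :=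
  ∃ μ₀, ∀ μ₁ μ₂, μ₀ ≤ μ₁ → μ₁ < μ₂ → s μ₁ < s μ₂

/-- The pseudo-Cauchy sequence `z` in `(B,v)` is of transcendental type. -/
def IsTranscendentalType {B ι : Type} [Field B] [LinearOrder ι]
    (v : AddValuation B (WithTop Γ)) (z : ι → B) : Prop :=
  ∀ f : Polynomial B, UltimatelyConstant (fun μ => v (f.eval (z μ)))

/-- `m` is an associated minimal polynomial of the pseudo-Cauchy sequence `z` of
algebraic type: a monic polynomial of minimal degree such that `(v m(z_μ))_μ` is
ultimately monotonically increasing. -/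
def IsAssocMinPoly {B ι : Type} [Field B] [LinearOrder ι]
    (v : AddValuation B (WithTop Γ)) (z : ι → B) (m : Polynomial B) : Prop :=
  m.Monic ∧ UltimatelyStrictMono (fun μ => v (m.eval (z μ))) ∧
    ∀ g : Polynomial B, g.Monic → UltimatelyStrictMono (fun μ => v (g.eval (z μ))) →
      m.natDegree ≤ g.natDegree

/-- `d = δ(f) = max { ω̄(x - c) : c ∈ K̄, f(c) = 0 }`, computed with respect to the
extension `W = ω̄` of `ω` to `K̄(x)`. -/
def IsDeltaOf (W : AddValuation (RatFunc (AlgebraicClosure K)) (WithTop Γ))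
    (f : Polynomial K) (d : WithTop Γ) : Prop :=
  (∃ c : AlgebraicClosure K, Polynomial.aeval c f = 0 ∧
      W (RatFunc.X - algebraMap (AlgebraicClosure K) (RatFunc (AlgebraicClosure K)) c) = d) ∧
  ∀ c : AlgebraicClosure K, Polynomial.aeval c f = 0 →
      W (RatFunc.X - algebraMap (AlgebraicClosure K) (RatFunc (AlgebraicClosure K)) c) ≤ d

/-- `Q` is a key polynomial for `ω` over `K` (with respect to the extension `W = ω̄`,
on which `δ` does not depend): `Q` is monic and `deg f < deg Q → δ(f) < δ(Q)`. -/
def IsKeyPolynomial (W : AddValuation (RatFunc (AlgebraicClosure K)) (WithTop Γ))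
    (Q : Polynomial K) : Prop :=
  Q.Monic ∧ ∀ f : Polynomial K, f.natDegree < Q.natDegree →
    ∀ df dQ : WithTop Γ, IsDeltaOf W f df → IsDeltaOf W Q dQ → df < dQ

/-- `(a,z)` is a distinguished pair over the henselian field `(K,ν̄)`:
`[K(z):K] < [K(a):K]`, `ν̄(a-z) = δ(a,K) = max M(a)`, and `[K(z):K]` is minimal
with these properties. -/
def IsDistinguishedPair (vbar : AddValuation (AlgebraicClosure K) (WithTop Γ))
    (a z : AlgebraicClosure K) : Prop :=
  degOver K z < degOver K a ∧
  (∀ z' : AlgebraicClosure K, degOver K z' < degOver K a → vbar (a - z') ≤ vbar (a - z)) ∧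
  (∀ z' : AlgebraicClosure K, degOver K z' < degOver K a → vbar (a - z') = vbar (a - z) →
      degOver K z ≤ degOver K z')

/-- The extension `(E(x)|E, W)` inside the valued field `(F,W)` is pure, where `x ∈ F`:
(PE1) some `W(x-c)`, `c ∈ E`, is non-torsion modulo the value group of `E`, or
(PE2) some `b(x-c)`, `b,c ∈ E`, has value `0` and residue transcendental over the
residue field of `E`, or (PE3) `x` is the limit of a pseudo-Cauchy sequence of
transcendental type in `(E,W)`. -/
def IsPureExt {F : Type} [Field F] (W : AddValuation F (WithTop Γ))
    (E : Subfield F) (x : F) : Prop :=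
  (∃ c ∈ E, ∃ γ : Γ, W (x - c) = (γ : WithTop Γ) ∧
      ∀ n : ℤ, n ≠ 0 → ∀ b ∈ E, b ≠ 0 → ((n • γ : Γ) : WithTop Γ) ≠ W b) ∨
  (∃ b ∈ E, ∃ c ∈ E, W (b * (x - c)) = 0 ∧ ResidueTransOver W (E : Set F) (b * (x - c))) ∨
  (∃ (ι : Type) (_ : LinearOrder ι) (succ : ι → ι), Nonempty ι ∧ IsSuccFn succ ∧
      ∃ z : ι → F, (∀ μ, z μ ∈ E) ∧ IsPseudoCauchy W z ∧
        (∀ p : Polynomial F, (∀ i, p.coeff i ∈ E) →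
          UltimatelyConstant fun μ => W (p.eval (z μ))) ∧
        IsPCLimit succ (RingHom.id F) W W z x)

/-- The extension `(E(x)|E, W)` is weakly pure: it is pure, or some `b(x-c)^e` with
`b,c ∈ E`, `e ∈ ℕ`, has value `0` and residue transcendental over the residue field
of `E`. -/
def IsWeaklyPureExt {F : Type} [Field F] (W : AddValuation F (WithTop Γ))
    (E : Subfield F) (x : F) : Prop :=
  IsPureExt W E x ∨
    ∃ b ∈ E, ∃ c ∈ E, ∃ e : ℕ, W (b * (x - c) ^ e) = 0 ∧
      ResidueTransOver W (E : Set F) (b * (x - c) ^ e)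


/-! ### Auxiliary lemmas for Statement 6 -/

section Statement6Aux

variable {K : Type} [Field K] {Γ : Type} [AddCommGroup Γ] [LinearOrder Γ] [IsOrderedAddMonoid Γ]

private lemma addval_multiset_prod {F : Type} [Field F] (v : AddValuation F (WithTop Γ))
    (s : Multiset F) : v s.prod = (s.map (fun x => v x)).sum := by
  induction s using Multiset.induction_on with
  | empty => simp
  | cons x s ih => simp [ih]

private lemma addval_sum_eq {F ι : Type} [Field F] (v : AddValuation F (WithTop Γ))
    (s : Finset ι) (t : ι → F) (i₀ : ι) (hi₀ : i₀ ∈ s)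
    (h : ∀ i ∈ s, i ≠ i₀ → v (t i₀) < v (t i)) :
    v (∑ i ∈ s, t i) = v (t i₀) := by
  classical
  rw [← Finset.add_sum_erase s t hi₀]
  by_cases htop : v (t i₀) = ⊤
  · have he : s.erase i₀ = ∅ := by
      rw [Finset.eq_empty_iff_forall_notMem]
      intro i hi
      exact not_top_lt (htop ▸ h i (Finset.mem_of_mem_erase hi) (Finset.ne_of_mem_erase hi))
    simp [he]
  · exact v.map_add_eq_of_lt_left (v.map_lt_sum htop fun i hi =>
      h i (Finset.mem_of_mem_erase hi) (Finset.ne_of_mem_erase hi))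

private lemma addval_zero_sum {F ι : Type} [Field F] (v : AddValuation F (WithTop Γ))
    (s : Finset ι) (t : ι → F) (hsum : ∑ i ∈ s, t i = 0)
    {i₁ : ι} (hi₁ : i₁ ∈ s) (hne : v (t i₁) ≠ ⊤) :
    ∃ i ∈ s, ∃ j ∈ s, i ≠ j ∧ v (t i) = v (t j) ∧ v (t i) ≠ ⊤ := by
  by_contra hcon
  push_neg at hcon
  obtain ⟨i₀, hi₀s, hmin⟩ := s.exists_min_image (fun i => v (t i)) ⟨i₁, hi₁⟩
  have hi₀top : v (t i₀) ≠ ⊤ := fun h => hne (top_le_iff.mp (h ▸ hmin i₁ hi₁))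
  have hs : v (∑ i ∈ s, t i) = v (t i₀) :=
    addval_sum_eq v s t i₀ hi₀s fun i hi hne' =>
      lt_of_le_of_ne (hmin i hi) fun hEq => hi₀top (hcon i₀ hi₀s i hi (Ne.symm hne') hEq)
  rw [hsum] at hs
  exact hi₀top (by simpa using hs.symm)

private lemma group_key {G : Type} [AddCommGroup G] {δi δj q : G} {i j : ℕ} (hij : i ≤ j)
    (h : δi + i • q = δj + j • q) : (j - i) • q + δj = δi := by
  have h1 : ((j - i) • q + δj) + i • q = δi + i • q := by
    calc ((j - i) • q + δj) + i • q = ((j - i) • q + i • q) + δj := by abel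
      _ = (j - i + i) • q + δj := by rw [add_nsmul]
      _ = j • q + δj := by rw [Nat.sub_add_cancel hij]
      _ = δi + i • q := by rw [add_comm]; exact h.symm
  exact add_right_cancel h1

private lemma torsion_val (vbar : AddValuation (AlgebraicClosure K) (WithTop Γ))
    (u : AlgebraicClosure K) (hu : u ≠ 0) :
    ∃ n : ℕ, 0 < n ∧ ∃ d : K, d ≠ 0 ∧
      n • vbar u = vbar (algebraMap K (AlgebraicClosure K) d) := by
  classical
  set φ := algebraMap K (AlgebraicClosure K) with hφdef
  have hint : IsIntegral K u := Algebra.IsIntegral.isIntegral u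
  set p := minpoly K u with hpdef
  have hmonic : p.Monic := minpoly.monic hint
  have hsum : ∑ i ∈ Finset.range (p.natDegree + 1), φ (p.coeff i) * u ^ i = 0 := by
    have h0 := minpoly.aeval K u
    rw [Polynomial.aeval_eq_sum_range] at h0
    simpa [Algebra.smul_def] using h0
  have hval : ∀ i : ℕ, vbar (φ (p.coeff i) * u ^ i) = vbar (φ (p.coeff i)) + i • vbar u := by
    intro i; rw [AddValuation.map_mul, AddValuation.map_pow]
  have hutop : vbar u ≠ ⊤ := vbar.ne_top_iff.mpr hu
  obtain ⟨δu, hδu⟩ := WithTop.ne_top_iff_exists.mp hutop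
  have hi₁ : vbar (φ (p.coeff p.natDegree) * u ^ p.natDegree) ≠ ⊤ := by
    rw [hval, hmonic.coeff_natDegree, map_one, AddValuation.map_one, zero_add, ← hδu,
      ← WithTop.coe_nsmul]
    exact WithTop.coe_ne_top
  have main : ∀ i j : ℕ, i < j →
      vbar (φ (p.coeff i) * u ^ i) = vbar (φ (p.coeff j) * u ^ j) →
      vbar (φ (p.coeff i) * u ^ i) ≠ ⊤ →
      ∃ n : ℕ, 0 < n ∧ ∃ d : K, d ≠ 0 ∧ n • vbar u = vbar (φ d) := by
    intro i j hlt heq htop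
    have hjtop : vbar (φ (p.coeff j) * u ^ j) ≠ ⊤ := heq ▸ htop
    have hci : vbar (φ (p.coeff i)) ≠ ⊤ := by
      intro h; exact htop (by rw [hval, h, top_add])
    have hcj : vbar (φ (p.coeff j)) ≠ ⊤ := by
      intro h; exact hjtop (by rw [hval, h, top_add])
    have hci0 : p.coeff i ≠ 0 := by
      intro h0; exact hci (by simp [h0])
    have hcj0 : p.coeff j ≠ 0 := by
      intro h0; exact hcj (by simp [h0])
    obtain ⟨δi, hδi⟩ := WithTop.ne_top_iff_exists.mp hci
    obtain ⟨δj, hδj⟩ := WithTop.ne_top_iff_exists.mp hcj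
    have hEqΓ : δi + i • δu = δj + j • δu := by
      have h2 := heq
      rw [hval, hval, ← hδi, ← hδj, ← hδu, ← WithTop.coe_nsmul, ← WithTop.coe_nsmul,
        ← WithTop.coe_add, ← WithTop.coe_add, WithTop.coe_inj] at h2
      exact h2
    have key : (j - i) • δu + δj = δi := group_key hlt.le hEqΓ
    have hφcj : φ (p.coeff j) ≠ 0 := by
      intro h0; exact hcj (by rw [h0]; simp)
    have hφd : vbar (φ (p.coeff i / p.coeff j)) = ((δi - δj : Γ) : WithTop Γ) := by
      apply WithTop.add_right_cancel (show ((δj : WithTop Γ)) ≠ ⊤ from WithTop.coe_ne_top)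
      calc vbar (φ (p.coeff i / p.coeff j)) + (δj : WithTop Γ)
          = vbar (φ (p.coeff i / p.coeff j)) + vbar (φ (p.coeff j)) := by rw [← hδj]
        _ = vbar (φ (p.coeff i / p.coeff j) * φ (p.coeff j)) := (vbar.map_mul _ _).symm
        _ = vbar (φ (p.coeff i)) := by rw [← map_mul, div_mul_cancel₀ _ hcj0]
        _ = (δi : WithTop Γ) := hδi.symm
        _ = ((δi - δj : Γ) : WithTop Γ) + (δj : WithTop Γ) := by
            rw [← WithTop.coe_add, sub_add_cancel]
    refine ⟨j - i, by omega, p.coeff i / p.coeff j, div_ne_zero hci0 hcj0, ?_⟩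
    rw [← hδu, ← WithTop.coe_nsmul, hφd, WithTop.coe_inj, eq_sub_iff_add_eq]
    exact key
  obtain ⟨i, his, j, hjs, hij, hEq, hitop⟩ :=
    addval_zero_sum vbar _ _ hsum (Finset.self_mem_range_succ p.natDegree) hi₁
  rcases hij.lt_or_gt with hlt | hlt
  · exact main i j hlt hEq hitop
  · exact main j i hlt hEq.symm (hEq ▸ hitop)

private lemma liftRF_algebraMap (p : Polynomial K) :
    liftRF K (algebraMap (Polynomial K) (RatFunc K) p)
      = algebraMap (Polynomial (AlgebraicClosure K)) (RatFunc (AlgebraicClosure K))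
          (p.map (algebraMap K (AlgebraicClosure K))) := by
  have h1 : algebraMap (Polynomial K) (RatFunc K) p
      = algebraMap _ _ p / algebraMap _ _ (1 : Polynomial K) := by simp
  rw [h1]
  unfold liftRF
  rw [RatFunc.coe_mapRingHom_eq_coe_map, RatFunc.map_apply_div]
  simp

variable (vbar : AddValuation (AlgebraicClosure K) (WithTop Γ))
  (ω : AddValuation (RatFunc K) (WithTop Γ))
  (a : AlgebraicClosure K) (γ : Γ)
  (W : AddValuation (RatFunc (AlgebraicClosure K)) (WithTop Γ))

private lemma omega_eq_W (hWω : Extends (liftRF K) ω W) (p : Polynomial K) :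
    ω (algebraMap (Polynomial K) (RatFunc K) p)
      = W (algebraMap (Polynomial (AlgebraicClosure K)) (RatFunc (AlgebraicClosure K))
          (p.map (algebraMap K (AlgebraicClosure K)))) := by
  rw [← hWω (algebraMap (Polynomial K) (RatFunc K) p), liftRF_algebraMap]

private lemma W_C (hmono : IsMonomialVal vbar W a γ) (c : AlgebraicClosure K) :
    W (algebraMap (Polynomial (AlgebraicClosure K)) (RatFunc (AlgebraicClosure K))
        (Polynomial.C c)) = vbar c := by
  rw [hmono]
  simp [Polynomial.taylor_C]

private lemma W_linear (hmono : IsMonomialVal vbar W a γ) (b : AlgebraicClosure K) :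
    W (algebraMap (Polynomial (AlgebraicClosure K)) (RatFunc (AlgebraicClosure K))
        (Polynomial.X - Polynomial.C b)) = min (vbar (a - b)) (γ : WithTop Γ) := by
  have ht : Polynomial.taylor a (Polynomial.X - Polynomial.C b)
      = Polynomial.X + Polynomial.C (a - b) := by
    rw [map_sub, Polynomial.taylor_X, Polynomial.taylor_C, map_sub]
    ring
  rw [hmono, Polynomial.natDegree_X_sub_C, ht]
  rw [show Finset.range (1 + 1) = {0, 1} from rfl]
  rw [Finset.inf_insert, Finset.inf_singleton]
  simp [Polynomial.coeff_C]

private lemma W_poly (hmono : IsMonomialVal vbar W a γ)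
    (p : Polynomial (AlgebraicClosure K)) (hp : p ≠ 0) :
    W (algebraMap (Polynomial (AlgebraicClosure K)) (RatFunc (AlgebraicClosure K)) p)
      = vbar p.leadingCoeff
        + (p.roots.map (fun b => min (vbar (a - b)) (γ : WithTop Γ))).sum := by
  classical
  have hfac := Polynomial.Splits.eq_prod_roots
    (IsAlgClosed.splits p)
  calc W (algebraMap _ _ p)
      = W (algebraMap _ _ (Polynomial.C p.leadingCoeff
          * (p.roots.map (fun b => Polynomial.X - Polynomial.C b)).prod)) := by rw [← hfac]
    _ = vbar p.leadingCoeff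
        + W (algebraMap _ _ ((p.roots.map (fun b => Polynomial.X - Polynomial.C b)).prod)) := by
        rw [map_mul, AddValuation.map_mul, W_C vbar a γ W hmono]
    _ = vbar p.leadingCoeff
        + (p.roots.map (fun b => W (algebraMap _ _ (Polynomial.X - Polynomial.C b)))).sum := by
        rw [map_multiset_prod, addval_multiset_prod, Multiset.map_map, Multiset.map_map]
        rfl
    _ = _ := by
        exact congrArg (vbar p.leadingCoeff + ·) (congrArg Multiset.sum
          (Multiset.map_congr rfl (fun b _ => W_linear vbar a γ W hmono b)))

private lemma poly_decomp (hmono : IsMonomialVal vbar W a γ)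
    (hWω : Extends (liftRF K) ω W) (p : Polynomial K) (hp : p ≠ 0) :
    ∃ (k : ℕ) (e : AlgebraicClosure K), e ≠ 0 ∧
      ω (algebraMap (Polynomial K) (RatFunc K) p) = ((k • γ : Γ) : WithTop Γ) + vbar e ∧
      (Polynomial.aeval a p = 0 → 1 ≤ k) := by
  classical
  set φ := algebraMap K (AlgebraicClosure K) with hφdef
  set pK := p.map φ with hpKdef
  have hpK0 : pK ≠ 0 := by
    rw [hpKdef, Ne, Polynomial.map_eq_zero_iff φ.injective]
    exact hp
  set s₁ := pK.roots.filter (fun b => (γ : WithTop Γ) ≤ vbar (a - b)) with hs₁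
  set s₂ := pK.roots.filter (fun b => ¬ (γ : WithTop Γ) ≤ vbar (a - b)) with hs₂
  have hsplit : s₁ + s₂ = pK.roots := Multiset.filter_add_not _ _
  have he₂ : ((s₂.map (fun b => a - b)).prod) ≠ 0 := by
    apply Multiset.prod_ne_zero
    intro h0
    obtain ⟨b, hb, hb0⟩ := Multiset.mem_map.mp h0
    exact (Multiset.mem_filter.mp hb).2 (by rw [hb0]; simp)
  have hlc : pK.leadingCoeff ≠ 0 := Polynomial.leadingCoeff_ne_zero.mpr hpK0
  have hsum : (pK.roots.map (fun b => min (vbar (a - b)) (γ : WithTop Γ))).sum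
      = Multiset.card s₁ • (γ : WithTop Γ) + vbar ((s₂.map (fun b => a - b)).prod) := by
    rw [← hsplit, Multiset.map_add, Multiset.sum_add]
    congr 1
    · rw [show s₁.map (fun b => min (vbar (a - b)) (γ : WithTop Γ))
          = s₁.map (fun _ => (γ : WithTop Γ)) from Multiset.map_congr rfl
          (fun b hb => min_eq_right (Multiset.mem_filter.mp hb).2),
        Multiset.map_const', Multiset.sum_replicate]
    · rw [addval_multiset_prod, Multiset.map_map]
      exact congrArg Multiset.sum (Multiset.map_congr rfl (fun b hb =>
        min_eq_left (le_of_lt (not_le.mp (Multiset.mem_filter.mp hb).2))))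
  refine ⟨Multiset.card s₁, pK.leadingCoeff * ((s₂.map (fun b => a - b)).prod),
    mul_ne_zero hlc he₂, ?_, ?_⟩
  · rw [omega_eq_W ω W hWω, W_poly vbar a γ W hmono pK hpK0, hsum,
      AddValuation.map_mul, WithTop.coe_nsmul]
    exact add_left_comm _ _ _
  · intro haeval
    have haR : a ∈ pK.roots := by
      rw [Polynomial.mem_roots hpK0, Polynomial.IsRoot, hpKdef, Polynomial.eval_map,
        ← Polynomial.aeval_def]
      exact haeval
    have has₁ : a ∈ s₁ := Multiset.mem_filter.mpr ⟨haR, by simp⟩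
    exact Multiset.card_pos_iff_exists_mem.mpr ⟨a, has₁⟩

end Statement6Aux


section Statement6Aux2

variable {K : Type} [Field K] {Γ : Type} [AddCommGroup Γ] [LinearOrder Γ] [IsOrderedAddMonoid Γ]
  (vbar : AddValuation (AlgebraicClosure K) (WithTop Γ))
  (ω : AddValuation (RatFunc K) (WithTop Γ))
  (a : AlgebraicClosure K) (γ : Γ)
  (W : AddValuation (RatFunc (AlgebraicClosure K)) (WithTop Γ))

private lemma omega_const (hmono : IsMonomialVal vbar W a γ)
    (hWω : Extends (liftRF K) ω W) (d : K) :
    ω (algebraMap K (RatFunc K) d) = vbar (algebraMap K (AlgebraicClosure K) d) := by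
  have h1 : algebraMap K (RatFunc K) d
      = algebraMap (Polynomial K) (RatFunc K) (Polynomial.C d) := by
    rw [IsScalarTower.algebraMap_apply K (Polynomial K) (RatFunc K) d,
      Polynomial.algebraMap_eq]
  rw [h1, omega_eq_W ω W hWω, Polynomial.map_C, W_C vbar a γ W hmono]

private lemma part2_lemma (hW : IsMinimalPairFor vbar W a γ)
    (hWω : Extends (liftRF K) ω W)
    (g : Polynomial K) (hg : g.degree < (minpoly K a).degree) :
    ω (algebraMap (Polynomial K) (RatFunc K) g) = vbar (Polynomial.aeval a g) := by
  classical
  by_cases hg0 : g = 0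
  · simp [hg0]
  set φ := algebraMap K (AlgebraicClosure K) with hφdef
  set gK := g.map φ with hgKdef
  have hgK0 : gK ≠ 0 := by
    rw [hgKdef, Ne, Polynomial.map_eq_zero_iff φ.injective]; exact hg0
  have hroot : ∀ b ∈ gK.roots, vbar (a - b) < (γ : WithTop Γ) := by
    intro b hb
    by_contra hle
    push_neg at hle
    have hb0 : Polynomial.aeval b g = 0 := by
      have h2 := (Polynomial.mem_roots hgK0).mp hb
      rwa [Polynomial.IsRoot, hgKdef, Polynomial.eval_map, ← Polynomial.aeval_def] at h2
    have h1 : (minpoly K b).natDegree ≤ g.natDegree :=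
      Polynomial.natDegree_le_of_dvd (minpoly.dvd K b hb0) hg0
    have h2 : g.natDegree < (minpoly K a).natDegree :=
      Polynomial.natDegree_lt_natDegree hg0 hg
    have h3 := hW.2 b hle
    simp only [degOver] at h3
    omega
  rw [omega_eq_W ω W hWω, W_poly vbar a γ W hW.1 gK hgK0]
  rw [show gK.roots.map (fun b => min (vbar (a - b)) (γ : WithTop Γ))
      = gK.roots.map (fun b => vbar (a - b)) from
    Multiset.map_congr rfl (fun b hb => min_eq_left (hroot b hb).le)]
  have h4 : Polynomial.aeval a g = Polynomial.eval a gK := by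
    rw [hgKdef, Polynomial.eval_map, Polynomial.aeval_def]
  rw [h4]
  have hfac := Polynomial.Splits.eq_prod_roots
    (IsAlgClosed.splits gK)
  conv_rhs => rw [hfac]
  rw [Polynomial.eval_mul, Polynomial.eval_C, Polynomial.eval_multiset_prod,
    Multiset.map_map, AddValuation.map_mul, addval_multiset_prod, Multiset.map_map]
  congr 1
  exact congrArg Multiset.sum (Multiset.map_congr rfl (fun b _ => by simp))

private lemma gamma_free (hvt : IsValueTranscendental (algebraMap K (RatFunc K)) ω)
    (hmono : IsMonomialVal vbar W a γ) (hWω : Extends (liftRF K) ω W)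
    (m : ℕ) (hm : 0 < m) (e : AlgebraicClosure K) (he : e ≠ 0) :
    ((m • γ : Γ) : WithTop Γ) ≠ vbar e := by
  intro heq
  obtain ⟨f, γf, hf0, hωf, hfree⟩ := hvt.1
  have hnum : f.num ≠ 0 := RatFunc.num_ne_zero hf0
  have hden : f.denom ≠ 0 := f.denom_ne_zero
  obtain ⟨kn, en, hen, Hn, -⟩ := poly_decomp vbar ω a γ W hmono hWω f.num hnum
  obtain ⟨kd, ed, hed, Hd, -⟩ := poly_decomp vbar ω a γ W hmono hWω f.denom hden
  have hden' : algebraMap (Polynomial K) (RatFunc K) f.denom ≠ 0 :=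
    RatFunc.algebraMap_ne_zero hden
  have hrel : algebraMap (Polynomial K) (RatFunc K) f.num
      = f * algebraMap (Polynomial K) (RatFunc K) f.denom :=
    (div_eq_iff hden').mp (RatFunc.num_div_denom f)
  have hEq0 : ((kn • γ : Γ) : WithTop Γ) + vbar en
      = (γf : WithTop Γ) + (((kd • γ : Γ) : WithTop Γ) + vbar ed) := by
    rw [← Hn, hrel, AddValuation.map_mul, hωf, Hd]
  obtain ⟨δn, hδn⟩ := WithTop.ne_top_iff_exists.mp (vbar.ne_top_iff.mpr hen)
  obtain ⟨δd, hδd⟩ := WithTop.ne_top_iff_exists.mp (vbar.ne_top_iff.mpr hed)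
  have hEqΓ : kn • γ + δn = γf + (kd • γ + δd) := by
    rw [← hδn, ← hδd, ← WithTop.coe_add, ← WithTop.coe_add, ← WithTop.coe_add,
      WithTop.coe_inj] at hEq0
    exact hEq0
  have e1 : kn • (m • γ) + m • δn = m • γf + (kd • (m • γ) + m • δd) := by
    have h2 := congrArg (fun z => m • z) hEqΓ
    simp only [smul_add] at h2
    rw [smul_comm m kn, smul_comm m kd] at h2
    exact h2
  have hA0 : e ^ kn * en ^ m ≠ 0 := mul_ne_zero (pow_ne_zero _ he) (pow_ne_zero _ hen)
  have hB0 : e ^ kd * ed ^ m ≠ 0 := mul_ne_zero (pow_ne_zero _ he) (pow_ne_zero _ hed)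
  have hvA : vbar (e ^ kn * en ^ m) = ((kn • (m • γ) + m • δn : Γ) : WithTop Γ) := by
    rw [AddValuation.map_mul, AddValuation.map_pow, AddValuation.map_pow, ← heq, ← hδn,
      ← WithTop.coe_nsmul, ← WithTop.coe_nsmul, ← WithTop.coe_add]
  have hvB : vbar (e ^ kd * ed ^ m) = ((kd • (m • γ) + m • δd : Γ) : WithTop Γ) := by
    rw [AddValuation.map_mul, AddValuation.map_pow, AddValuation.map_pow, ← heq, ← hδd,
      ← WithTop.coe_nsmul, ← WithTop.coe_nsmul, ← WithTop.coe_add]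
  have hu : vbar ((e ^ kn * en ^ m) / (e ^ kd * ed ^ m)) = ((m • γf : Γ) : WithTop Γ) := by
    apply WithTop.add_right_cancel (show vbar (e ^ kd * ed ^ m) ≠ ⊤ from
      vbar.ne_top_iff.mpr hB0)
    rw [← AddValuation.map_mul, div_mul_cancel₀ _ hB0, hvA, hvB, ← WithTop.coe_add,
      WithTop.coe_inj]
    exact e1
  obtain ⟨n, hn, d, hd, hnd⟩ := torsion_val vbar _ (div_ne_zero hA0 hB0)
  rw [hu, ← WithTop.coe_nsmul] at hnd
  have hne : ((n * m : ℕ) : ℤ) ≠ 0 := Int.natCast_ne_zero.mpr (Nat.mul_pos hn hm).ne'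
  apply hfree ((n * m : ℕ) : ℤ) hne d hd
  rw [natCast_zsmul, mul_nsmul, omega_const vbar ω a γ W hmono hWω d,
    smul_comm m n γf]
  exact hnd

private lemma distinct_vals (hvt : IsValueTranscendental (algebraMap K (RatFunc K)) ω)
    (hW : IsMinimalPairFor vbar W a γ) (hWω : Extends (liftRF K) ω W)
    (i j : ℕ) (hij : i < j) (αi αj : AlgebraicClosure K)
    (hαi : αi ≠ 0) (hαj : αj ≠ 0) :
    vbar αi + i • ω (algebraMap (Polynomial K) (RatFunc K) (minpoly K a))
      ≠ vbar αj + j • ω (algebraMap (Polynomial K) (RatFunc K) (minpoly K a)) := by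
  intro hEq
  have hint : IsIntegral K a := Algebra.IsIntegral.isIntegral a
  obtain ⟨kQ, eQ, heQ, hQval, hk⟩ :=
    poly_decomp vbar ω a γ W hW.1 hWω (minpoly K a) (minpoly.ne_zero hint)
  have hkQ : 1 ≤ kQ := hk (minpoly.aeval K a)
  obtain ⟨δQ, hδQ⟩ := WithTop.ne_top_iff_exists.mp (vbar.ne_top_iff.mpr heQ)
  obtain ⟨δi, hδi⟩ := WithTop.ne_top_iff_exists.mp (vbar.ne_top_iff.mpr hαi)
  obtain ⟨δj, hδj⟩ := WithTop.ne_top_iff_exists.mp (vbar.ne_top_iff.mpr hαj)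
  have hQ : ω (algebraMap (Polynomial K) (RatFunc K) (minpoly K a))
      = ((kQ • γ + δQ : Γ) : WithTop Γ) := by
    rw [hQval, ← hδQ, ← WithTop.coe_add]
  have hEqΓ : δi + i • (kQ • γ + δQ) = δj + j • (kQ • γ + δQ) := by
    rw [hQ, ← hδi, ← hδj, ← WithTop.coe_nsmul, ← WithTop.coe_nsmul, ← WithTop.coe_add,
      ← WithTop.coe_add, WithTop.coe_inj] at hEq
    exact hEq
  have key : (j - i) • (kQ • γ + δQ) + δj = δi := group_key hij.le hEqΓ
  have hm0 : 0 < (j - i) * kQ := Nat.mul_pos (by omega) hkQ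
  have hkey2 : ((j - i) * kQ) • γ + ((j - i) • δQ + δj) = δi := by
    rw [← key, smul_add, mul_nsmul, smul_comm kQ (j - i) γ]
    abel
  have hC0 : eQ ^ (j - i) * αj ≠ 0 := mul_ne_zero (pow_ne_zero _ heQ) hαj
  have hCval : vbar (eQ ^ (j - i) * αj) = (((j - i) • δQ + δj : Γ) : WithTop Γ) := by
    rw [AddValuation.map_mul, AddValuation.map_pow, ← hδQ, ← hδj, ← WithTop.coe_nsmul,
      ← WithTop.coe_add]
  have hfin : ((((j - i) * kQ) • γ : Γ) : WithTop Γ)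
      = vbar (αi / (eQ ^ (j - i) * αj)) := by
    apply WithTop.add_right_cancel (show vbar (eQ ^ (j - i) * αj) ≠ ⊤ from
      vbar.ne_top_iff.mpr hC0)
    rw [← AddValuation.map_mul, div_mul_cancel₀ _ hC0, ← hδi, hCval, ← WithTop.coe_add,
      WithTop.coe_inj]
    exact hkey2
  exact gamma_free vbar ω a γ W hvt hW.1 hWω ((j - i) * kQ) hm0 _
    (div_ne_zero hαi hC0) hfin

end Statement6Aux2

/-- Lemma: description of a value transcendental extension by a
minimal pair.  Let `ω` be a value transcendental extension of `ν` to `K(x)` with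
minimal pair of definition `(a,γ)` (realized by `W = ω̄ = ν̄_{a,γ}`), and let
`Q = minpoly K a`.  Then (1) `ωQ ∉ ν̄K̄`; (2) for every `g ∈ K[x]` with
`deg g < deg Q`, `ωg = ν̄ g(a)`; (3) for every `Q`-expansion `f = Σᵢ fᵢ Qⁱ`
(`deg fᵢ < deg Q`), `ωf = minᵢ (ν̄ fᵢ(a) + i·ωQ)`. -/
theorem statement_6 {K : Type} [Field K] {Γ : Type} [AddCommGroup Γ] [LinearOrder Γ] [IsOrderedAddMonoid Γ]
    (vbar : AddValuation (AlgebraicClosure K) (WithTop Γ))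
    (ω : AddValuation (RatFunc K) (WithTop Γ))
    (hvt : IsValueTranscendental (algebraMap K (RatFunc K)) ω)
    (a : AlgebraicClosure K) (γ : Γ)
    (W : AddValuation (RatFunc (AlgebraicClosure K)) (WithTop Γ))
    (hW : IsMinimalPairFor vbar W a γ)
    (hWω : Extends (liftRF K) ω W) :
    (∀ c : AlgebraicClosure K, c ≠ 0 →
      ω (algebraMap (Polynomial K) (RatFunc K) (minpoly K a)) ≠ vbar c) ∧
    (∀ g : Polynomial K, g.degree < (minpoly K a).degree →
      ω (algebraMap (Polynomial K) (RatFunc K) g) = vbar (Polynomial.aeval a g)) ∧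
    (∀ (r : ℕ) (fs : ℕ → Polynomial K),
      (∀ i ∈ Finset.range (r + 1), (fs i).degree < (minpoly K a).degree) →
      ω (algebraMap (Polynomial K) (RatFunc K)
          (∑ i ∈ Finset.range (r + 1), fs i * (minpoly K a) ^ i)) =
        (Finset.range (r + 1)).inf (fun i =>
          vbar (Polynomial.aeval a (fs i)) +
            i • ω (algebraMap (Polynomial K) (RatFunc K) (minpoly K a)))) := by
  classical
  have hint : IsIntegral K a := Algebra.IsIntegral.isIntegral a
  have hQ0 : minpoly K a ≠ 0 := minpoly.ne_zero hint
  refine ⟨?_, ?_, ?_⟩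
  · -- Part (1)
    intro c hc hEq
    obtain ⟨k, e, he, hval, hk⟩ := poly_decomp vbar ω a γ W hW.1 hWω (minpoly K a) hQ0
    have hk1 : 1 ≤ k := hk (minpoly.aeval K a)
    have hkey : ((k • γ : Γ) : WithTop Γ) = vbar (c / e) := by
      apply WithTop.add_right_cancel (show vbar e ≠ ⊤ from vbar.ne_top_iff.mpr he)
      rw [← hval, hEq, ← AddValuation.map_mul, div_mul_cancel₀ _ he]
    exact gamma_free vbar ω a γ W hvt hW.1 hWω k hk1 (c / e) (div_ne_zero hc he) hkey
  · -- Part (2)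
    exact fun g hg => part2_lemma vbar ω a γ W hW hWω g hg
  · -- Part (3)
    intro r fs hdeg
    have haeval : ∀ i ∈ Finset.range (r + 1), fs i ≠ 0 → Polynomial.aeval a (fs i) ≠ 0 := by
      intro i hi hfsi h0
      have h1 : (minpoly K a).natDegree ≤ (fs i).natDegree :=
        Polynomial.natDegree_le_of_dvd (minpoly.dvd K a h0) hfsi
      have h2 : (fs i).natDegree < (minpoly K a).natDegree :=
        Polynomial.natDegree_lt_natDegree hfsi (hdeg i hi)
      omega
    have hmap : algebraMap (Polynomial K) (RatFunc K)
          (∑ i ∈ Finset.range (r + 1), fs i * (minpoly K a) ^ i)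
        = ∑ i ∈ Finset.range (r + 1),
            algebraMap (Polynomial K) (RatFunc K) (fs i) *
              algebraMap (Polynomial K) (RatFunc K) (minpoly K a) ^ i := by
      rw [map_sum]; exact Finset.sum_congr rfl fun i _ => by rw [map_mul, map_pow]
    have hterm : ∀ i ∈ Finset.range (r + 1),
        ω (algebraMap (Polynomial K) (RatFunc K) (fs i) *
          algebraMap (Polynomial K) (RatFunc K) (minpoly K a) ^ i)
        = vbar (Polynomial.aeval a (fs i)) +
            i • ω (algebraMap (Polynomial K) (RatFunc K) (minpoly K a)) := by
      intro i hi
      rw [AddValuation.map_mul, AddValuation.map_pow,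
        part2_lemma vbar ω a γ W hW hWω (fs i) (hdeg i hi)]
    by_cases hSe : (Finset.range (r + 1)).filter (fun i => fs i ≠ 0) = ∅
    · have hz : ∀ i ∈ Finset.range (r + 1), fs i = 0 := by
        intro i hi
        by_contra h0
        exact (Finset.eq_empty_iff_forall_notMem.mp hSe i) (Finset.mem_filter.mpr ⟨hi, h0⟩)
      have hsum0 : (∑ i ∈ Finset.range (r + 1), fs i * (minpoly K a) ^ i) = 0 :=
        Finset.sum_eq_zero fun i hi => by rw [hz i hi, zero_mul]
      rw [hsum0, map_zero, AddValuation.map_zero, eq_comm, eq_top_iff]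
      apply Finset.le_inf
      intro i hi
      rw [hz i hi]
      simp
    · obtain ⟨i₁, hi₁⟩ := Finset.nonempty_of_ne_empty hSe
      obtain ⟨i₀, hi₀S, hmin⟩ := ((Finset.range (r + 1)).filter (fun i => fs i ≠ 0)).exists_min_image
        (fun i => vbar (Polynomial.aeval a (fs i)) +
          i • ω (algebraMap (Polynomial K) (RatFunc K) (minpoly K a))) ⟨i₁, hi₁⟩
      have hi₀r : i₀ ∈ Finset.range (r + 1) := (Finset.mem_filter.mp hi₀S).1
      have hi₀0 : fs i₀ ≠ 0 := (Finset.mem_filter.mp hi₀S).2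
      have hstrict : ∀ i ∈ (Finset.range (r + 1)).filter (fun i => fs i ≠ 0), i ≠ i₀ →
          vbar (Polynomial.aeval a (fs i₀)) +
            i₀ • ω (algebraMap (Polynomial K) (RatFunc K) (minpoly K a))
          < vbar (Polynomial.aeval a (fs i)) +
            i • ω (algebraMap (Polynomial K) (RatFunc K) (minpoly K a)) := by
        intro i hiS hne
        refine lt_of_le_of_ne (hmin i hiS) ?_
        intro hEq
        have hir : i ∈ Finset.range (r + 1) := (Finset.mem_filter.mp hiS).1
        have hαi₀ := haeval i₀ hi₀r hi₀0
        have hαi := haeval i hir (Finset.mem_filter.mp hiS).2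
        rcases lt_or_gt_of_ne hne with hlt | hlt
        · exact distinct_vals vbar ω a γ W hvt hW hWω i i₀ hlt _ _ hαi hαi₀ hEq.symm
        · exact distinct_vals vbar ω a γ W hvt hW hWω i₀ i hlt _ _ hαi₀ hαi hEq
      have hsub : ∑ i ∈ Finset.range (r + 1),
            algebraMap (Polynomial K) (RatFunc K) (fs i) *
              algebraMap (Polynomial K) (RatFunc K) (minpoly K a) ^ i
          = ∑ i ∈ (Finset.range (r + 1)).filter (fun i => fs i ≠ 0),
            algebraMap (Polynomial K) (RatFunc K) (fs i) *
              algebraMap (Polynomial K) (RatFunc K) (minpoly K a) ^ i := by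
        symm
        apply Finset.sum_subset (Finset.filter_subset _ _)
        intro i hi hni
        have h0 : fs i = 0 := by
          by_contra h0
          exact hni (Finset.mem_filter.mpr ⟨hi, h0⟩)
        rw [h0, map_zero, zero_mul]
      have hω : ω (algebraMap (Polynomial K) (RatFunc K)
            (∑ i ∈ Finset.range (r + 1), fs i * (minpoly K a) ^ i))
          = vbar (Polynomial.aeval a (fs i₀)) +
              i₀ • ω (algebraMap (Polynomial K) (RatFunc K) (minpoly K a)) := by
        rw [hmap, hsub, addval_sum_eq ω _ _ i₀ hi₀S (fun i hiS hne => by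
          rw [hterm i (Finset.mem_filter.mp hiS).1, hterm i₀ hi₀r]
          exact hstrict i hiS hne), hterm i₀ hi₀r]
      rw [hω]
      apply le_antisymm
      · apply Finset.le_inf
        intro i hi
        by_cases h0 : fs i = 0
        · rw [h0]
          simp
        · exact hmin i (Finset.mem_filter.mpr ⟨hi, h0⟩)
      · exact Finset.inf_le hi₀r

end VT
end
end

section
/- Let (K,ν) be a henselian valued field, ω a valuation transcendental extension of ν to K(x) with pair of definition (a,γ), and assume that (K(a)|K,ν̄) is a defectless extension. Let a = a₀, a₁, …, a_n be a complete distinguished chain for a. Then there exists i ∈ {0, …, n} such that (aᵢ,γ) is a minimal pair of definition for ω. -/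
/- ---------------------------------------------------------------------------
Common definitions for formalizing "Minimal pairs, minimal fields and
implicit constant fields" (Dutta).

Valuations are formalized additively, as `AddValuation F (WithTop Γ)` where
`Γ` is a linearly ordered abelian group; the value `⊤` plays the role of the
value `∞` of `0`.  The algebraic closure `K̄` of `K` is `AlgebraicClosure K`,
the rational function field `K(x)` is `RatFunc K`, and a fixed algebraic
closure of `K̄(x)` (equivalently, of `K(x)`) is
`Lhat K := AlgebraicClosure (RatFunc (AlgebraicClosure K))`.
--------------------------------------------------------------------------- -/

noncomputable section

open Polynomial

namespace VT

variable {K : Type} [Field K] {Γ : Type} [AddCommGroup Γ] [LinearOrder Γ] [IsOrderedAddMonoid Γ]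

section AuxMinPair

variable {F : Type} [Field F]

lemma aux_inf_le_val_sum (v : AddValuation F (WithTop Γ)) (s : Finset ℕ) (f : ℕ → F) :
    s.inf (fun i => v (f i)) ≤ v (∑ i ∈ s, f i) := by
  classical
  induction s using Finset.induction with
  | empty => simp [v.map_zero]
  | @insert a s ha ih =>
      rw [Finset.sum_insert ha, Finset.inf_insert]
      exact le_trans (min_le_min le_rfl ih) (v.map_add _ _)

lemma aux_le_val_sum_add (v : AddValuation F (WithTop Γ)) (s : Finset ℕ) (f : ℕ → F)
    (t d : WithTop Γ) (h : ∀ m ∈ s, t ≤ v (f m) + d) : t ≤ v (∑ i ∈ s, f i) + d := by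
  rcases s.eq_empty_or_nonempty with rfl | hs
  · rw [Finset.sum_empty, v.map_zero, top_add]
    exact le_top
  · obtain ⟨m, hm, hinf⟩ := Finset.exists_mem_eq_inf s hs (fun i => v (f i))
    refine (h m hm).trans (add_le_add_left ?_ d)
    exact hinf ▸ aux_inf_le_val_sum v s f

lemma aux_val_natCast (v : AddValuation F (WithTop Γ)) (n : ℕ) :
    (0 : WithTop Γ) ≤ v (n : F) := by
  induction n with
  | zero => simp [v.map_zero]
  | succ k ih =>
      have : ((k + 1 : ℕ) : F) = (k : F) + 1 := by push_cast; ring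
      rw [this]
      exact le_trans (le_min ih v.map_one.ge) (v.map_add _ _)

lemma aux_taylor_coeff_ge (v : AddValuation F (WithTop Γ)) (γ : Γ) {c : F}
    (hc : (γ : WithTop Γ) ≤ v c) (q : F[X]) (i : ℕ) :
    (Finset.range (q.natDegree + 1)).inf (fun j => v (q.coeff j) + j • (γ : WithTop Γ))
      ≤ v ((Polynomial.taylor c q).coeff i) + i • (γ : WithTop Γ) := by
  rw [Polynomial.taylor_coeff, Polynomial.eval_eq_sum_range]
  apply aux_le_val_sum_add
  intro m _
  rw [Polynomial.hasseDeriv_coeff, v.map_mul, v.map_mul, v.map_pow]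
  by_cases hd : q.coeff (m + i) = 0
  · rw [hd, v.map_zero]
    simp [top_add]
  · have hmem : m + i ∈ Finset.range (q.natDegree + 1) := by
      rw [Finset.mem_range, Nat.lt_succ_iff]
      exact Polynomial.le_natDegree_of_ne_zero hd
    refine le_trans (Finset.inf_le hmem) ?_
    have h1 : v (q.coeff (m + i)) ≤ v (((m + i).choose i : F)) + v (q.coeff (m + i)) := by
      calc v (q.coeff (m + i)) = 0 + v (q.coeff (m + i)) := (zero_add _).symm
        _ ≤ _ := add_le_add_left (aux_val_natCast v _) _
    have h2 : (m : ℕ) • (γ : WithTop Γ) ≤ m • v c := nsmul_le_nsmul_right hc m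
    calc v (q.coeff (m + i)) + (m + i) • (γ : WithTop Γ)
        = v (q.coeff (m + i)) + (m • (γ : WithTop Γ) + i • (γ : WithTop Γ)) := by
          rw [add_nsmul]
      _ = (v (q.coeff (m + i)) + m • (γ : WithTop Γ)) + i • (γ : WithTop Γ) := by
          rw [add_assoc]
      _ ≤ ((v (((m + i).choose i : F)) + v (q.coeff (m + i))) + m • v c)
            + i • (γ : WithTop Γ) := by
          refine add_le_add_left (add_le_add h1 h2) _
      _ = v (((m + i).choose i : F)) + v (q.coeff (m + i)) + m • v c
            + i • (γ : WithTop Γ) := rfl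

lemma aux_inf_taylor_eq (v : AddValuation F (WithTop Γ)) (γ : Γ) {c : F}
    (hc : (γ : WithTop Γ) ≤ v c) (q : F[X]) :
    (Finset.range (q.natDegree + 1)).inf
        (fun i => v ((Polynomial.taylor c q).coeff i) + i • (γ : WithTop Γ)) =
      (Finset.range (q.natDegree + 1)).inf
        (fun j => v (q.coeff j) + j • (γ : WithTop Γ)) := by
  apply le_antisymm
  · refine Finset.le_inf fun j _ => ?_
    have hq : Polynomial.taylor (-c) (Polynomial.taylor c q) = q := by
      rw [Polynomial.taylor_taylor, neg_add_cancel, Polynomial.taylor_zero]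
    have hnd : (Polynomial.taylor c q).natDegree = q.natDegree :=
      Polynomial.natDegree_taylor q c
    have h := aux_taylor_coeff_ge v γ (c := -c) (by rwa [v.map_neg])
      (Polynomial.taylor c q) j
    rw [hq, hnd] at h
    exact h
  · exact Finset.le_inf fun i _ => aux_taylor_coeff_ge v γ hc q i

end AuxMinPair

lemma aux_monomial_transfer (vbar : AddValuation (AlgebraicClosure K) (WithTop Γ))
    (W : AddValuation (RatFunc (AlgebraicClosure K)) (WithTop Γ))
    (a b : AlgebraicClosure K) (γ : Γ)
    (hW : IsMonomialVal vbar W a γ) (hab : (γ : WithTop Γ) ≤ vbar (a - b)) :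
    IsMonomialVal vbar W b γ := by
  intro p
  rw [hW p]
  have hq : Polynomial.taylor (b - a) (Polynomial.taylor a p) = Polynomial.taylor b p := by
    rw [Polynomial.taylor_taylor]
    congr 1
    ring
  have hba : (γ : WithTop Γ) ≤ vbar (b - a) := by rwa [vbar.map_sub_swap]
  have h := aux_inf_taylor_eq vbar γ hba (Polynomial.taylor a p)
  rw [hq, Polynomial.natDegree_taylor] at h
  exact h.symm

/-- Theorem: minimal pairs from complete distinguished chains.
Let `(K,ν)` be henselian, `ω` a valuation transcendental extension of `ν` to `K(x)`
with pair of definition `(a,γ)`, and assume `(K(a)|K,ν̄)` is defectless, i.e.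
`[K(a):K] = (ν̄K(a):νK) · [K(a)ν̄ : Kν]`.  If `a = a₀, a₁, …, a_n` is a complete
distinguished chain for `a`, then `(aᵢ,γ)` is a minimal pair of definition for `ω`
for some `i`. -/
theorem statement_10 {K : Type} [Field K] {Γ : Type} [AddCommGroup Γ] [LinearOrder Γ] [IsOrderedAddMonoid Γ]
    (vbar : AddValuation (AlgebraicClosure K) (WithTop Γ))
    (ω : AddValuation (RatFunc K) (WithTop Γ))
    (hhens : IsHenselianBase vbar)
    (hvt : IsValuationTranscendental (algebraMap K (RatFunc K)) ω)
    (a : AlgebraicClosure K) (γ : Γ)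
    (hpair : IsPairOfDef vbar ω a γ)
    (hdefectless : ∃ f' : ℕ,
      ResidueDegreeIs vbar (Set.range (algebraMap K (AlgebraicClosure K)))
        (IntermediateField.adjoin K {a} : Set (AlgebraicClosure K)) f' ∧
      degOver K a =
        (valueSubgroup vbar (Set.range (algebraMap K (AlgebraicClosure K)))).relIndex
          (valueSubgroup vbar
            (IntermediateField.adjoin K {a} : Set (AlgebraicClosure K))) * f')
    (n : ℕ) (as : Fin (n + 1) → AlgebraicClosure K)
    (h0 : as 0 = a)
    (hchain : ∀ i : Fin n, IsDistinguishedPair vbar (as i.castSucc) (as i.succ))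
    (hlast : as (Fin.last n) ∈ Set.range (algebraMap K (AlgebraicClosure K))) :
    ∃ i : Fin (n + 1), IsMinimalPairOfDef vbar ω (as i) γ := by
  obtain ⟨W, hW, hext⟩ := hpair
  have hdeg1 : ∀ b : AlgebraicClosure K, 1 ≤ degOver K b := by
    intro b
    exact minpoly.natDegree_pos ((Algebra.IsAlgebraic.isAlgebraic (R := K) b).isIntegral)
  have hlast1 : degOver K (as (Fin.last n)) = 1 := by
    obtain ⟨k, hk⟩ := hlast
    rw [← hk]
    unfold degOver
    rw [minpoly.eq_X_sub_C]
    exact Polynomial.natDegree_X_sub_C k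
  have key : ∀ m : ℕ, ∀ i : Fin (n + 1), n ≤ (i : ℕ) + m →
      (γ : WithTop Γ) ≤ vbar (a - as i) →
      ∃ j : Fin (n + 1), (γ : WithTop Γ) ≤ vbar (a - as j) ∧
        ∀ b, (γ : WithTop Γ) ≤ vbar (as j - b) → degOver K (as j) ≤ degOver K b := by
    intro m
    induction m with
    | zero =>
        intro i hi hclose
        have hi' : i = Fin.last n := by
          apply Fin.ext
          have := i.is_le
          simpa using le_antisymm this (by simpa using hi)
        subst hi'
        exact ⟨Fin.last n, hclose, fun b _ => by rw [hlast1]; exact hdeg1 b⟩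
    | succ m ih =>
        intro i hi hclose
        by_cases hmin : ∀ b, (γ : WithTop Γ) ≤ vbar (as i - b) →
            degOver K (as i) ≤ degOver K b
        · exact ⟨i, hclose, hmin⟩
        · push_neg at hmin
          obtain ⟨b, hb1, hb2⟩ := hmin
          have hin : (i : ℕ) < n := by
            by_contra hcon
            have : i = Fin.last n := by
              apply Fin.ext
              have := i.is_le
              simp only [Fin.val_last]
              omega
            rw [this, hlast1] at hb2
            exact absurd (hdeg1 b) (by omega)
          set i' : Fin n := ⟨(i : ℕ), hin⟩ with hi'def
          have hcs : i'.castSucc = i := by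
            apply Fin.ext
            rfl
          obtain ⟨hd1, hd2, hd3⟩ := hchain i'
          rw [hcs] at hd1 hd2 hd3
          have h5 : (γ : WithTop Γ) ≤ vbar (as i - as i'.succ) :=
            le_trans hb1 (hd2 b hb2)
          have h6 : (γ : WithTop Γ) ≤ vbar (a - as i'.succ) := by
            have hadd := vbar.map_add (a - as i) (as i - as i'.succ)
            rw [sub_add_sub_cancel] at hadd
            exact le_trans (le_min hclose h5) hadd
          refine ih i'.succ ?_ h6
          have hsv : ((i'.succ : Fin (n + 1)) : ℕ) = (i : ℕ) + 1 := rfl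
          omega
  obtain ⟨j, hj1, hj2⟩ := key n 0 (by simp)
    (by rw [h0, sub_self, vbar.map_zero]; exact le_top)
  exact ⟨j, ⟨W, aux_monomial_transfer vbar W a (as j) γ hW hj1, hext⟩, hj2⟩

end VT
end
end
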